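/- Fix an integer q ≥ 2 and an alphabet Σ_q of size q. For all integers n, p with 2 ≤ p ≤ n and n ≥ 2p−4, the following identity of integers holds: (q−1) · (q^n − a_q(n, n, p)) = q · Σ_{d=1}^{p−1} μ(d) · (q^{⌊(p−1)/d⌋} − 1), where μ is the Möbius function. Equivalently, a_q(n, n, p) = q^n − (q/(q−1)) · Σ_{d=1}^{p−1} μ(d) · (q^{⌊(p−1)/d⌋} − 1). -/

import Mathlib

/-- `p` is a period of the vector `s = (s_1, …, s_n)` (0-indexed here):
`s_i = s_{i+p}` for all valid indices. -/
def IsPeriod {α : Type*} {n : ℕ} (s : Fin n → α) (p : ℕ) : Prop :=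
  ∀ i : ℕ, ∀ h : i + p < n,
    s ⟨i, lt_of_le_of_lt (Nat.le_add_right i p) h⟩ = s ⟨i + p, h⟩

/-- The window of length `ℓ` of `s` starting at (0-indexed) position `i`. -/
def window {α : Type*} {n : ℕ} (s : Fin n → α) (i ℓ : ℕ) (h : i + ℓ ≤ n) :
    Fin ℓ → α :=
  fun j => s ⟨i + j, Nat.lt_of_lt_of_le (Nat.add_lt_add_left j.isLt i) h⟩

/-- `s` is an `ℓ`-window `p`-least-period avoiding vector: no window of
length `ℓ` has any period `p'` with `1 ≤ p' < p`. -/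
def LPAvoiding {α : Type*} {n : ℕ} (ℓ p : ℕ) (s : Fin n → α) : Prop :=
  ∀ i : ℕ, ∀ h : i + ℓ ≤ n, ∀ p', 1 ≤ p' → p' < p →
    ¬ IsPeriod (window s i ℓ h) p'

/-- `s` is an `ℓ`-window `p`-period avoiding vector: no window of
length `ℓ` has period `p`. -/
def PAvoiding {α : Type*} {n : ℕ} (ℓ p : ℕ) (s : Fin n → α) : Prop :=
  ∀ i : ℕ, ∀ h : i + ℓ ≤ n, ¬ IsPeriod (window s i ℓ h) p

/-- `s` satisfies the `k`-RLL constraint w.r.t. the zero symbol `z`: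
no window of length `k` consists entirely of `z`. -/
def RLLok {α : Type*} {n : ℕ} (z : α) (k : ℕ) (s : Fin n → α) : Prop :=
  ∀ i : ℕ, ∀ h : i + k ≤ n, ∃ j : Fin k, window s i k h j ≠ z

section AqAux
open Finset

lemma chain_period {α : Type*} {n : ℕ} {s : Fin n → α} {a : ℕ} (ha : IsPeriod s a) :
    ∀ k : ℕ, ∀ i j : Fin n, (i : ℕ) + k * a = j → s i = s j := by
  intro k
  induction k with
  | zero => intro i j h; congr 1; exact Fin.ext (by simpa using h)
  | succ k ih =>
    intro i j h
    rw [Nat.succ_mul] at h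
    have hjn : (j : ℕ) < n := j.isLt
    have hlt : (i : ℕ) + k * a + a < n := by omega
    have h1 : s i = s ⟨(i : ℕ) + k * a, by omega⟩ := ih i _ rfl
    have h2 := ha ((i : ℕ) + k * a) hlt
    rw [h1]
    rw [show s ⟨(i:ℕ) + k*a, by omega⟩ = s ⟨(i:ℕ)+k*a, by
      exact lt_of_le_of_lt (Nat.le_add_right _ a) hlt⟩ from rfl, h2]
    congr 1
    exact Fin.ext (by simp; omega)


lemma period_of_dvd {α : Type*} {n : ℕ} {s : Fin n → α} {e d : ℕ} (hed : e ∣ d)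
    (he : IsPeriod s e) : IsPeriod s d := by
  intro i h
  obtain ⟨k, rfl⟩ := hed
  exact chain_period he k _ _ (by simp [Nat.mul_comm])


lemma mod_period {α : Type*} {n : ℕ} {s : Fin n → α} {a : ℕ} (ha : IsPeriod s a)
    (i j : Fin n) (hij : (i : ℕ) % a = (j : ℕ) % a) : s i = s j := by
  rcases le_total (i : ℕ) (j : ℕ) with h | h
  · obtain ⟨k, hk⟩ := (Nat.modEq_iff_dvd' h).mp hij
    rw [Nat.mul_comm] at hk
    exact chain_period ha k i j (by omega)
  · obtain ⟨k, hk⟩ := (Nat.modEq_iff_dvd' h).mp hij.symm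
    rw [Nat.mul_comm] at hk
    exact (chain_period ha k j i (by omega)).symm

/-- Fine–Wilf, congruence form, with ordered periods `b ≤ a`. -/
lemma fw_aux {α : Type*} : ∀ ab : ℕ, ∀ {n a b : ℕ}, ∀ s : Fin n → α,
    a + b ≤ ab → 1 ≤ b → b ≤ a → IsPeriod s a → IsPeriod s b →
    a + b ≤ n + Nat.gcd a b →
    ∀ i j : Fin n, (i : ℕ) % Nat.gcd a b = (j : ℕ) % Nat.gcd a b → s i = s j := by
  intro ab
  induction ab with
  | zero => intro n a b s hab hb _ _ _ _ _ _ _; omega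
  | succ ab ih =>
    intro n a b s hab hb1 hba ha hb hsum i j hij
    by_cases hle : a + b ≤ ab
    · exact ih s hle hb1 hba ha hb hsum i j hij
    rcases eq_or_lt_of_le hba with rfl | hlt
    · -- b = a : gcd a a = a
      rw [Nat.gcd_self] at hij
      exact mod_period ha i j hij
    · -- b < a
      set g := Nat.gcd a b with hgdef
      have hg1 : 1 ≤ g := Nat.gcd_pos_of_pos_right a hb1
      have hgb : g ≤ b := Nat.le_of_dvd hb1 (Nat.gcd_dvd_right a b)
      have hgab : g ∣ a - b := Nat.dvd_sub (Nat.gcd_dvd_left a b) (Nat.gcd_dvd_right a b)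
      have hab1 : a - b ≥ g := Nat.le_of_dvd (by omega) hgab
      have hn : b ≤ n := by omega
      have hnb : b ≤ n - b := by omega
      -- the truncated word
      set t : Fin (n - b) → α := fun x => s ⟨x, lt_of_lt_of_le x.isLt (Nat.sub_le n b)⟩
        with htdef
      have htb : IsPeriod t b := by
        intro x hx
        have := hb x (by omega)
        exact this
      have hta : IsPeriod t (a - b) := by
        intro x hx
        have h1 := ha x (by omega)
        have h2 := hb (x + (a - b)) (by omega)
        show s ⟨x, _⟩ = s ⟨x + (a-b), _⟩
        rw [show (⟨x, lt_of_lt_of_le (lt_of_le_of_lt (Nat.le_add_right x (a-b))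
          hx) (Nat.sub_le n b)⟩ : Fin n) = ⟨x, by omega⟩ from rfl, h1]
        rw [show s (⟨x + (a-b), lt_of_lt_of_le hx (Nat.sub_le n b)⟩ : Fin n)
          = s ⟨x + (a-b), by omega⟩ from rfl, h2]
        congr 1
        exact Fin.ext (by simp; omega)
      -- reduce an index into [0, n-b)
      have red : ∀ x : Fin n, ∃ y : Fin (n - b),
          (y : ℕ) % g = (x : ℕ) % g ∧ t y = s x := by
        intro x
        by_cases hx : (x : ℕ) < n - b
        · exact ⟨⟨x, hx⟩, rfl, rfl⟩
        · have hxb : b ≤ (x : ℕ) := by omega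
          refine ⟨⟨(x : ℕ) - b, by omega⟩, ?_, ?_⟩
          · obtain ⟨c, hc⟩ : g ∣ b := Nat.gcd_dvd_right a b
            show ((x : ℕ) - b) % g = (x : ℕ) % g
            have hxx : ((x : ℕ) - b) + g * c = (x : ℕ) := by omega
            conv_rhs => rw [← hxx]
            rw [Nat.add_mul_mod_self_left]
          · have h2 := hb ((x : ℕ) - b) (by omega)
            show s ⟨(x:ℕ) - b, _⟩ = s x
            rw [show s (⟨(x:ℕ) - b, lt_of_lt_of_le (Fin.isLt ⟨(x:ℕ)-b, by omega⟩)
              (Nat.sub_le n b)⟩ : Fin n) = s ⟨(x:ℕ)-b, by omega⟩ from rfl, h2]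
            congr 1
            exact Fin.ext (by simp; omega)
      obtain ⟨i', hi'm, hi'e⟩ := red i
      obtain ⟨j', hj'm, hj'e⟩ := red j
      rw [← hi'e, ← hj'e]
      -- apply induction hypothesis with pair (b, a-b), ordered
      rcases le_total b (a - b) with hcase | hcase
      · have hgcd : Nat.gcd (a - b) b = g := by
          exact Nat.gcd_sub_self_left hba
        exact ih t (by omega) hb1 hcase hta htb (by omega) i' j'
          (by rw [hgcd]; omega)
      · have hgcd : Nat.gcd b (a - b) = g := by
          rw [Nat.gcd_sub_self_right hba, Nat.gcd_comm]
        exact ih t (by omega) (by omega) hcase htb hta (by omega) i' j'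
          (by rw [hgcd]; omega)

/-- number of `d`-periodic words of length `n` is `q^d`. -/
lemma card_period_filter {Sigma : Type*} [Fintype Sigma] {n d : ℕ} (hd : 1 ≤ d)
    (hdn : d ≤ n) [DecidablePred (fun s : Fin n → Sigma => IsPeriod s d)] :
    (Finset.univ.filter (fun s : Fin n → Sigma => IsPeriod s d)).card =
      Fintype.card Sigma ^ d := by
  classical
  have hd0 : 0 < d := hd
  have key : (Finset.univ : Finset (Fin d → Sigma)).card =
      (Finset.univ.filter (fun s : Fin n → Sigma => IsPeriod s d)).card := by
    apply Finset.card_bij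
      (fun w _ => (fun i : Fin n => w ⟨(i : ℕ) % d, Nat.mod_lt _ hd0⟩))
    · intro w _
      rw [Finset.mem_filter]
      refine ⟨Finset.mem_univ _, ?_⟩
      intro i h
      exact congrArg w (Fin.ext (Nat.add_mod_right i d).symm)
    · intro w _ w' _ h
      funext j
      have h1 := congrFun h ⟨j, lt_of_lt_of_le j.isLt hdn⟩
      simpa [Fin.ext_iff, Nat.mod_eq_of_lt j.isLt] using h1
    · intro s hs
      rw [Finset.mem_filter] at hs
      refine ⟨fun j => s ⟨j, lt_of_lt_of_le j.isLt hdn⟩, Finset.mem_univ _, ?_⟩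
      funext i
      exact chain_period hs.2 ((i : ℕ) / d) _ i (by simp [Nat.mod_add_div'])
  rw [← key]
  simp [Fintype.card_fun]


/-- geometric sum identity. -/
lemma geom_aux (q : ℤ) : ∀ k : ℕ, (q - 1) * ∑ e ∈ Finset.Icc 1 k, q ^ e
    = q * (q ^ k - 1) := by
  intro k
  induction k with
  | zero => simp
  | succ k ih =>
    rw [Finset.sum_Icc_succ_top (by omega), mul_add, ih]
    ring


end AqAux

/-- For `2 ≤ p ≤ n` and `n ≥ 2p−4` (identity of integers):
`(q−1)·(q^n − a_q(n,n,p)) = q·Σ_{d=1}^{p−1} μ(d)·(q^{⌊(p−1)/d⌋} − 1)`. -/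
theorem aq_n_n_p
    {q : ℕ} (hq : 2 ≤ q) (Sigma : Type*) [Fintype Sigma]
    (hcard : Fintype.card Sigma = q)
    (n p : ℕ) (hp : 2 ≤ p) (hpn : p ≤ n) (hn : 2 * p - 4 ≤ n) :
    ((q : ℤ) - 1) *
        ((q : ℤ) ^ n - (Nat.card {s : Fin n → Sigma // LPAvoiding n p s} : ℤ)) =
      (q : ℤ) * ∑ d ∈ Finset.Icc 1 (p - 1),
        (ArithmeticFunction.moebius d : ℤ) * ((q : ℤ) ^ ((p - 1) / d) - 1) := by
  classical
  set m := p - 1 with hm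
  have hm1 : 1 ≤ m := by omega
  have hmn : m < n := by omega
  set P : ℕ → Finset (Fin n → Sigma) :=
    fun d => Finset.univ.filter (fun s => IsPeriod s d) with hP
  set MP : ℕ → Finset (Fin n → Sigma) :=
    fun d => Finset.univ.filter
      (fun s => IsPeriod s d ∧ ∀ e, 1 ≤ e → e < d → ¬ IsPeriod s e) with hMP
  -- least-period divisibility
  have hdvd : ∀ (s : Fin n → Sigma) (e d : ℕ), 1 ≤ e → e ≤ d → d ≤ m →
      IsPeriod s e → IsPeriod s d →
      (∀ e', 1 ≤ e' → e' < e → ¬ IsPeriod s e') → e ∣ d := by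
    intro s e d he hed hdm hpe hpd hmin
    by_contra hnd
    have hne : e ≠ d := by rintro rfl; exact hnd dvd_rfl
    have hlt : e < d := lt_of_le_of_ne hed hne
    have hg1 : 1 ≤ Nat.gcd d e := Nat.gcd_pos_of_pos_right d he
    have hge : Nat.gcd d e ≤ e := Nat.le_of_dvd he (Nat.gcd_dvd_right d e)
    have hglt : Nat.gcd d e < e := by
      rcases lt_or_eq_of_le hge with h | h
      · exact h
      · exfalso; exact hnd (h ▸ Nat.gcd_dvd_left d e)
    have hperg : IsPeriod s (Nat.gcd d e) := by
      intro i h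
      exact fw_aux (d + e) s le_rfl he hed hpd hpe (by omega) _ _
        (by simp [Nat.add_mod_right])
    exact hmin _ hg1 hglt hperg
  -- existence of the least period
  have least : ∀ (s : Fin n → Sigma) (d : ℕ), 1 ≤ d → IsPeriod s d →
      ∃ e, 1 ≤ e ∧ e ≤ d ∧ s ∈ MP e := by
    intro s d hd hpd
    have hex : ∃ e, 0 < e ∧ IsPeriod s e := ⟨d, hd, hpd⟩
    refine ⟨Nat.find hex, (Nat.find_spec hex).1, Nat.find_le ⟨hd, hpd⟩, ?_⟩
    simp only [hMP, Finset.mem_filter, Finset.mem_univ, true_and]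
    refine ⟨(Nat.find_spec hex).2, ?_⟩
    intro e' h1 h2 hpe'
    exact Nat.find_min hex h2 ⟨h1, hpe'⟩
  -- disjointness of MP's
  have MPdisj : ∀ x y : ℕ, 1 ≤ x → 1 ≤ y → x ≠ y → Disjoint (MP x) (MP y) := by
    have key : ∀ x y : ℕ, 1 ≤ x → x < y → Disjoint (MP x) (MP y) := by
      intro x y hx hxy
      rw [Finset.disjoint_left]
      intro s hsx hsy
      simp only [hMP, Finset.mem_filter, Finset.mem_univ, true_and] at hsx hsy
      exact hsy.2 x hx hxy hsx.1
    intro x y hx hy hxy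
    rcases lt_or_gt_of_ne hxy with h | h
    · exact key x y hx h
    · exact (key y x hy h).symm
  -- P d is partitioned by MP over divisors
  have biUnionP : ∀ d, 1 ≤ d → d ≤ m → P d = d.divisors.biUnion MP := by
    intro d hd hdm
    ext s
    simp only [hP, Finset.mem_filter, Finset.mem_univ, true_and, Finset.mem_biUnion,
      Nat.mem_divisors]
    constructor
    · intro hpd
      obtain ⟨e, he1, hed, hmem⟩ := least s d hd hpd
      have hmm := hmem
      simp only [hMP, Finset.mem_filter, Finset.mem_univ, true_and] at hmm
      exact ⟨e, ⟨hdvd s e d he1 hed hdm hmm.1 hpd hmm.2, by omega⟩, hmem⟩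
    · rintro ⟨e, ⟨hed, -⟩, hmem⟩
      simp only [hMP, Finset.mem_filter, Finset.mem_univ, true_and] at hmem
      exact period_of_dvd hed hmem.1
  have cardPd : ∀ d, 1 ≤ d → d ≤ m → ∑ e ∈ d.divisors, (MP e).card = q ^ d := by
    intro d hd hdm
    have h1 : (P d).card = q ^ d := by
      rw [hP]
      rw [card_period_filter hd (by omega)]
      rw [hcard]
    rw [← h1, biUnionP d hd hdm, Finset.card_biUnion]
    intro x hx y hy hxy
    exact MPdisj x y (Nat.pos_of_mem_divisors hx) (Nat.pos_of_mem_divisors hy) hxy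
  -- characterization of LPAvoiding
  have hwin : ∀ s : Fin n → Sigma, ∀ h : (0:ℕ) + n ≤ n, window s 0 n h = s := by
    intro s h
    funext j
    show s ⟨0 + (j : ℕ), _⟩ = s j
    congr 1
    exact Fin.ext (by simp)
  have LPA_iff : ∀ s : Fin n → Sigma,
      ¬ LPAvoiding n p s ↔ ∃ e, 1 ≤ e ∧ e ≤ m ∧ IsPeriod s e := by
    intro s
    constructor
    · intro h
      unfold LPAvoiding at h
      push_neg at h
      obtain ⟨i, hh, e, h1, h2, h3⟩ := h
      have hi : i = 0 := by omega
      subst hi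
      rw [hwin s hh] at h3
      exact ⟨e, h1, by omega, h3⟩
    · rintro ⟨e, h1, h2, h3⟩ hLPA
      have := hLPA 0 (by omega) e h1 (by omega)
      rw [hwin s (by omega)] at this
      exact this h3
  -- Bad set
  set Bad : Finset (Fin n → Sigma) :=
    Finset.univ.filter (fun s => ¬ LPAvoiding n p s) with hBad
  have badUnion : Bad = (Finset.Icc 1 m).biUnion MP := by
    ext s
    simp only [hBad, Finset.mem_filter, Finset.mem_univ, true_and, Finset.mem_biUnion,
      Finset.mem_Icc, LPA_iff]
    constructor
    · rintro ⟨e, h1, h2, h3⟩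
      obtain ⟨e', he1, he2, hmem⟩ := least s e h1 h3
      exact ⟨e', ⟨he1, by omega⟩, hmem⟩
    · rintro ⟨e, ⟨h1, h2⟩, hmem⟩
      simp only [hMP, Finset.mem_filter, Finset.mem_univ, true_and] at hmem
      exact ⟨e, h1, h2, hmem.1⟩
  have cardBad : Bad.card = ∑ d ∈ Finset.Icc 1 m, (MP d).card := by
    rw [badUnion, Finset.card_biUnion]
    intro x hx y hy hxy
    rw [Finset.mem_coe, Finset.mem_Icc] at hx hy
    exact MPdisj x y hx.1 hy.1 hxy
  -- complement count
  have total : (Finset.univ.filter (fun s : Fin n → Sigma => LPAvoiding n p s)).card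
      + Bad.card = q ^ n := by
    rw [hBad, Finset.card_filter_add_card_filter_not]
    simp [Fintype.card_fun, hcard]
  have aN : Nat.card {s : Fin n → Sigma // LPAvoiding n p s}
      = (Finset.univ.filter (fun s : Fin n → Sigma => LPAvoiding n p s)).card := by
    rw [Nat.card_eq_fintype_card, Fintype.card_subtype]
  have key1 : (q : ℤ) ^ n - (Nat.card {s : Fin n → Sigma // LPAvoiding n p s} : ℤ)
      = (Bad.card : ℤ) := by
    rw [aN]
    have hz : (((Finset.univ.filter (fun s : Fin n → Sigma => LPAvoiding n p s)).card
        + Bad.card : ℕ) : ℤ) = ((q ^ n : ℕ) : ℤ) := by rw [total]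
    push_cast at hz
    linarith
  -- Möbius inversion
  have inv := (ArithmeticFunction.sum_eq_iff_sum_mul_moebius_eq_on
    (R := ℤ) (f := fun d => ((MP d).card : ℤ)) (g := fun k => (q : ℤ) ^ k)
    (Set.Icc 1 m) (by
      intro a b hab hb
      simp only [Set.mem_Icc] at hb ⊢
      have hb1 : 1 ≤ b := hb.1
      have ha1 : 1 ≤ a := Nat.pos_of_dvd_of_pos hab (by omega)
      exact ⟨ha1, le_trans (Nat.le_of_dvd (by omega) hab) hb.2⟩)).mp
    (by
      intro k hk hkm
      simp only [Set.mem_Icc] at hkm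
      exact_mod_cast cardPd k hkm.1 hkm.2)
  -- reindex double sum
  have swap : ∑ k ∈ Finset.Icc 1 m, ∑ x ∈ k.divisorsAntidiagonal,
        ((ArithmeticFunction.moebius x.1 : ℤ) * (q : ℤ) ^ x.2)
      = ∑ c ∈ Finset.Icc 1 m, ∑ e ∈ Finset.Icc 1 (m / c),
        ((ArithmeticFunction.moebius c : ℤ) * (q : ℤ) ^ e) := by
    rw [Finset.sum_sigma', Finset.sum_sigma']
    apply Finset.sum_bij'
      (i := fun (x : (_ : ℕ) × (ℕ × ℕ)) _ => (⟨x.2.1, x.2.2⟩ : (_ : ℕ) × ℕ))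
      (j := fun (x : (_ : ℕ) × ℕ) _ => (⟨x.1 * x.2, (x.1, x.2)⟩ : (_ : ℕ) × (ℕ × ℕ)))
    · rintro ⟨k, c, e⟩ hx
      simp only [Finset.mem_sigma, Finset.mem_Icc, Nat.mem_divisorsAntidiagonal] at hx ⊢
      obtain ⟨⟨hk1, hkm⟩, hce, hk0⟩ := hx
      have hc1 : 1 ≤ c := by
        rcases Nat.eq_zero_or_pos c with h | h
        · simp [h] at hce; omega
        · exact h
      have he1 : 1 ≤ e := by
        rcases Nat.eq_zero_or_pos e with h | h
        · simp [h] at hce; omega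
        · exact h
      refine ⟨⟨hc1, ?_⟩, he1, ?_⟩
      · calc c ≤ c * e := Nat.le_mul_of_pos_right c he1
          _ = k := hce
          _ ≤ m := hkm
      · rw [Nat.le_div_iff_mul_le hc1, Nat.mul_comm]
        omega
    · rintro ⟨c, e⟩ hx
      simp only [Finset.mem_sigma, Finset.mem_Icc, Nat.mem_divisorsAntidiagonal] at hx ⊢
      obtain ⟨⟨hc1, hcm⟩, he1, hem⟩ := hx
      rw [Nat.le_div_iff_mul_le hc1, Nat.mul_comm] at hem
      have h1 : 1 ≤ c * e := by
        calc 1 ≤ c := hc1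
          _ ≤ c * e := Nat.le_mul_of_pos_right c he1
      exact ⟨⟨h1, hem⟩, trivial, by omega⟩
    · rintro ⟨k, c, e⟩ hx
      simp only [Finset.mem_sigma, Nat.mem_divisorsAntidiagonal] at hx
      obtain ⟨-, hce, -⟩ := hx
      simp [hce]
    · rintro ⟨c, e⟩ hx
      rfl
    · rintro ⟨k, c, e⟩ hx
      rfl
  -- geometric sums
  have geo := geom_aux (q : ℤ)
  -- assembling
  rw [key1, cardBad]
  push_cast
  calc ((q:ℤ) - 1) * ∑ d ∈ Finset.Icc 1 m, ((MP d).card : ℤ)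
      = ((q:ℤ) - 1) * ∑ k ∈ Finset.Icc 1 m, ∑ x ∈ k.divisorsAntidiagonal,
          ((ArithmeticFunction.moebius x.1 : ℤ) * (q : ℤ) ^ x.2) := by
        congr 1
        apply Finset.sum_congr rfl
        intro k hk
        rw [Finset.mem_Icc] at hk
        exact (inv k hk.1 (by simp [Set.mem_Icc]; omega)).symm
    _ = ∑ c ∈ Finset.Icc 1 m, ((ArithmeticFunction.moebius c : ℤ)
          * (((q:ℤ) - 1) * ∑ e ∈ Finset.Icc 1 (m / c), (q : ℤ) ^ e)) := by
        rw [swap, Finset.mul_sum]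
        apply Finset.sum_congr rfl
        intro c _
        rw [← Finset.mul_sum]
        ring
    _ = ∑ c ∈ Finset.Icc 1 m, ((ArithmeticFunction.moebius c : ℤ)
          * ((q:ℤ) * ((q:ℤ) ^ (m / c) - 1))) := by
        apply Finset.sum_congr rfl
        intro c _
        rw [geo (m / c)]
    _ = (q : ℤ) * ∑ d ∈ Finset.Icc 1 m,
          (ArithmeticFunction.moebius d : ℤ) * ((q : ℤ) ^ (m / d) - 1) := by
        rw [Finset.mul_sum]
        apply Finset.sum_congr rfl
        intro c _
        ring
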